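/- Let H_A and H_B be finite-dimensional Hilbert spaces, let E be a function on unit vectors of H_B with values in [0,1] (extended by E(0) = 0), and let f : [0,∞) → [0,∞) be a concave, monotonically increasing function such that |E(|ψ⟩) − E(|ψ'⟩)| ≤ f(‖ψ − ψ'‖₁) for all unit vectors |ψ⟩, |ψ'⟩ ∈ H_B and E(|ψ⟩) ≤ f(1) for all unit vectors |ψ⟩ ∈ H_B. Then for any fixed orthonormal basis β of H_A and any unit vectors |Ψ⟩, |Ψ'⟩ ∈ H_A ⊗ H_B, the average post-measurement entanglements satisfy |Ē_β(|Ψ⟩) − Ē_β(|Ψ'⟩)| ≤ f(2‖Ψ − Ψ'‖₁) + ‖Ψ − Ψ'‖₁. -/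

import Mathlib

open scoped BigOperators ComplexConjugate ComplexOrder

noncomputable section

namespace QIpaper

/-- Inner product `⟨ψ|φ⟩`, conjugate-linear in the first argument. -/
def braket {I : Type*} [Fintype I] (ψ φ : I → ℂ) : ℂ := ∑ x, conj (ψ x) * φ x

/-- Outer product `|ψ⟩⟨ψ|`. -/
def dm {I : Type*} (ψ : I → ℂ) : Matrix I I ℂ := Matrix.of fun x y => ψ x * conj (ψ y)

open Classical in
/-- Positive semidefinite square root (junk value `0` on non-PSD matrices). -/
def psdSqrt {I : Type*} [Fintype I] [DecidableEq I] (A : Matrix I I ℂ) : Matrix I I ℂ :=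
  if h : A.PosSemidef then
    (h.1.eigenvectorUnitary : Matrix I I ℂ) *
      Matrix.diagonal ((↑) ∘ Real.sqrt ∘ h.1.eigenvalues) *
      (star h.1.eigenvectorUnitary : Matrix I I ℂ)
  else 0

/-- The trace norm `‖A‖₁ = tr √(AᴴA)`. -/
def traceNorm {I : Type*} [Fintype I] [DecidableEq I] (A : Matrix I I ℂ) : ℝ :=
  (psdSqrt (A.conjTranspose * A)).trace.re

/-- Fidelity `F(ρ,σ) = tr √(√ρ σ √ρ)`. -/
def fidelity {I : Type*} [Fintype I] [DecidableEq I] (ρ σ : Matrix I I ℂ) : ℝ :=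
  (psdSqrt (psdSqrt ρ * σ * psdSqrt ρ)).trace.re

/-- Purity `tr(ρ²)`. -/
def purity {I : Type*} [Fintype I] (ρ : Matrix I I ℂ) : ℝ := ((ρ * ρ).trace).re

def sigmaX : Matrix (Fin 2) (Fin 2) ℂ := !![0, 1; 1, 0]
def sigmaY : Matrix (Fin 2) (Fin 2) ℂ := !![0, -Complex.I; Complex.I, 0]
def sigmaZ : Matrix (Fin 2) (Fin 2) ℂ := !![1, 0; 0, -1]

/-- `σ_y^{⊗I}` on the qubits indexed by `I`. -/
def sigmaYn {I : Type*} [Fintype I] [DecidableEq I] : Matrix (I → Fin 2) (I → Fin 2) ℂ :=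
  Matrix.of fun x y => ∏ k, sigmaY (x k) (y k)

/-- The `n`-tangle `τ(ψ) = |⟨ψ|σ_y^{⊗n}|ψ*⟩|`. -/
def tangle {I : Type*} [Fintype I] [DecidableEq I] (ψ : (I → Fin 2) → ℂ) : ℝ :=
  ‖∑ x, ∑ y, conj (ψ x) * sigmaYn x y * conj (ψ y)‖

/-- Entrywise complex conjugate of a matrix. -/
def conjM {I J : Type*} (ρ : Matrix I J ℂ) : Matrix I J ℂ := Matrix.of fun x y => conj (ρ x y)

/-- `ρ̃ = σ_y^{⊗n} ρ* σ_y^{⊗n}`. -/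
def tildeM {I : Type*} [Fintype I] [DecidableEq I] (ρ : Matrix (I → Fin 2) (I → Fin 2) ℂ) :
    Matrix (I → Fin 2) (I → Fin 2) ℂ := sigmaYn * conjM ρ * sigmaYn

/-- The Wootters tilde `|ψ̃⟩ = σ_y^{⊗n}|ψ*⟩`. -/
def wtilde {I : Type*} [Fintype I] [DecidableEq I] (ψ : (I → Fin 2) → ℂ) : (I → Fin 2) → ℂ :=
  sigmaYn.mulVec (fun x => conj (ψ x))

/-- Reduced density matrix of the pure state `ψ` on the qubits in `s`
(tracing out the complement). -/
def reduced {n : ℕ} (s : Finset (Fin n)) (ψ : (Fin n → Fin 2) → ℂ) :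
    Matrix ({i : Fin n // i ∈ s} → Fin 2) ({i : Fin n // i ∈ s} → Fin 2) ℂ :=
  Matrix.of fun a b => ∑ c : {i : Fin n // i ∉ s} → Fin 2,
    ψ (fun i => if h : i ∈ s then a ⟨i, h⟩ else c ⟨i, h⟩) *
    conj (ψ (fun i => if h : i ∈ s then b ⟨i, h⟩ else c ⟨i, h⟩))

/-- GME-concurrence `C_GME(ψ) = min_{∅ ⊊ γ ⊊ [n]} √(2(1 − tr ψ_γ²))`. -/
def gme {n : ℕ} (ψ : (Fin n → Fin 2) → ℂ) : ℝ :=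
  sInf {r : ℝ | ∃ γ : Finset (Fin n), γ ≠ ∅ ∧ γ ≠ Finset.univ ∧
    r = Real.sqrt (2 * (1 - purity (reduced γ ψ)))}

/-- Concentratable entanglement `C(ψ; s) = 1 − 2^{−|s|} Σ_{γ⊆s} tr(ψ_γ²)`. -/
def CE {n : ℕ} (ψ : (Fin n → Fin 2) → ℂ) (s : Finset (Fin n)) : ℝ :=
  1 - (1 / 2 ^ s.card) * ∑ γ ∈ s.powerset, purity (reduced γ ψ)

/-- The subnormalized post-measurement vector `(⟨v|⊗I)|Ψ⟩`. -/
def contract {IA IB : Type*} [Fintype IA] (v : IA → ℂ) (Ψ : IA × IB → ℂ) : IB → ℂ :=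
  fun y => ∑ x, conj (v x) * Ψ (x, y)

/-- Probability `p_v = ⟨Ψ|(|v⟩⟨v| ⊗ I)|Ψ⟩` of outcome `v`. -/
def prob {IA IB : Type*} [Fintype IA] [Fintype IB] (v : IA → ℂ) (Ψ : IA × IB → ℂ) : ℝ :=
  (braket (contract v Ψ) (contract v Ψ)).re

/-- Normalized post-measurement state (the zero vector when the probability vanishes). -/
def postState {IA IB : Type*} [Fintype IA] [Fintype IB] (v : IA → ℂ) (Ψ : IA × IB → ℂ) :
    IB → ℂ := fun y => ((Real.sqrt (prob v Ψ) : ℂ))⁻¹ * contract v Ψ y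

/-- `b` is an orthonormal family. (An orthonormal family indexed by the space's own
index type is an orthonormal basis.) -/
def ONB {J I : Type*} [Fintype I] [DecidableEq J] (b : J → I → ℂ) : Prop :=
  ∀ i j, braket (b i) (b j) = if i = j then 1 else 0

/-- Average post-measurement entanglement `Ē_β(Ψ) = Σ_i p_i E(φ_i)`. -/
def avgE {ι IA IB : Type*} [Fintype ι] [Fintype IA] [Fintype IB]
    (E : (IB → ℂ) → ℝ) (b : ι → IA → ℂ) (Ψ : IA × IB → ℂ) : ℝ :=
  ∑ i, prob (b i) Ψ * E (postState (b i) Ψ)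

/-- Multipartite entanglement of assistance: supremum of `Ē_β` over all
orthonormal bases `β` of `H_A`. -/
def Lglobal {IA IB : Type*} [Fintype IA] [Fintype IB] [DecidableEq IA]
    (E : (IB → ℂ) → ℝ) (Ψ : IA × IB → ℂ) : ℝ :=
  sSup {r : ℝ | ∃ b : IA → IA → ℂ, ONB b ∧ r = avgE E b Ψ}

/-- Tensor-product basis of `(ℂ²)^{⊗K}` built from single-qubit bases. -/
def productBasis {K : Type*} [Fintype K] (q : K → Fin 2 → Fin 2 → ℂ) :
    (K → Fin 2) → (K → Fin 2) → ℂ :=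
  fun i x => ∏ k, q k (i k) (x k)

/-- Localizable multipartite entanglement: supremum of `Ē_β` over product bases of
single-qubit orthonormal bases of `H_A = (ℂ²)^{⊗K}`. -/
def Lloc {K IB : Type*} [Fintype K] [DecidableEq K] [Fintype IB]
    (E : (IB → ℂ) → ℝ) (Ψ : (K → Fin 2) × IB → ℂ) : ℝ :=
  sSup {r : ℝ | ∃ q : K → Fin 2 → Fin 2 → ℂ, (∀ k, ONB (q k)) ∧
    r = avgE E (productBasis q) Ψ}

/-- Partial trace over the `A` system of `|Ψ⟩⟨Ψ|`. -/
def ptraceA {IA IB : Type*} [Fintype IA] (Ψ : IA × IB → ℂ) : Matrix IB IB ℂ :=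
  Matrix.of fun y y' => ∑ x, Ψ (x, y) * conj (Ψ (x, y'))

/-- Reduced density matrix of `|Ψ⟩⟨Ψ|` on the subset `s` of the `B` qubits. -/
def reducedB {IA : Type*} [Fintype IA] {n : ℕ} (s : Finset (Fin n))
    (Ψ : IA × (Fin n → Fin 2) → ℂ) :
    Matrix ({i : Fin n // i ∈ s} → Fin 2) ({i : Fin n // i ∈ s} → Fin 2) ℂ :=
  Matrix.of fun a b => ∑ x : IA, ∑ c : {i : Fin n // i ∉ s} → Fin 2,
    Ψ (x, fun i => if h : i ∈ s then a ⟨i, h⟩ else c ⟨i, h⟩) *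
    conj (Ψ (x, fun i => if h : i ∈ s then b ⟨i, h⟩ else c ⟨i, h⟩))


set_option linter.unusedSectionVars false
set_option maxHeartbeats 1000000

section Aux
variable {I : Type*} [Fintype I]

lemma braket_eq_inner (ψ φ : I → ℂ) :
    braket ψ φ = inner ℂ ((WithLp.equiv 2 (I → ℂ)).symm ψ) ((WithLp.equiv 2 (I → ℂ)).symm φ) := by
  simp [braket, PiLp.inner_apply, RCLike.inner_apply', mul_comm]

lemma braket_self_eq_zero {ψ : I → ℂ} (h : braket ψ ψ = 0) : ψ = 0 := by
  rw [braket_eq_inner] at h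
  have := inner_self_eq_zero.mp h
  simpa [WithLp.equiv] using this

lemma braket_conj (ψ φ : I → ℂ) : conj (braket ψ φ) = braket φ ψ := by
  simp [braket, Finset.sum_comm, map_sum, mul_comm]

lemma braket_self_coe (ψ : I → ℂ) : braket ψ ψ = ((braket ψ ψ).re : ℂ) := by
  rw [braket_eq_inner]
  exact (inner_self_ofReal_re _).symm

lemma braket_self_nonneg (ψ : I → ℂ) : 0 ≤ (braket ψ ψ).re := by
  rw [braket_eq_inner]; exact inner_self_nonneg (𝕜 := ℂ)

lemma abs_braket_sq_le (ψ φ : I → ℂ) :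
    ‖braket ψ φ‖ ^ 2 ≤ (braket ψ ψ).re * (braket φ φ).re := by
  rw [braket_eq_inner, braket_eq_inner, braket_eq_inner]
  have h := norm_inner_le_norm (𝕜 := ℂ) ((WithLp.equiv 2 (I → ℂ)).symm ψ) ((WithLp.equiv 2 (I → ℂ)).symm φ)
  have h1 := @inner_self_eq_norm_sq ℂ _ _ _ _ ((WithLp.equiv 2 (I → ℂ)).symm ψ)
  have h2 := @inner_self_eq_norm_sq ℂ _ _ _ _ ((WithLp.equiv 2 (I → ℂ)).symm φ)
  simp only [RCLike.re_to_complex] at h1 h2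
  rw [h1, h2, ← mul_pow]
  calc ‖(inner ℂ ((WithLp.equiv 2 (I → ℂ)).symm ψ) ((WithLp.equiv 2 (I → ℂ)).symm φ))‖ ^ 2
      ≤ (‖(WithLp.equiv 2 (I → ℂ)).symm ψ‖ * ‖(WithLp.equiv 2 (I → ℂ)).symm φ‖) ^ 2 := by
        apply pow_le_pow_left₀ (by positivity) h
    _ = _ := rfl


lemma dm_conjTranspose (ψ : I → ℂ) : (dm ψ).conjTranspose = dm ψ := by
  ext x y; simp [dm, Matrix.conjTranspose_apply, mul_comm]

lemma dm_mul_dm (ψ φ : I → ℂ) :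
    dm ψ * dm φ = Matrix.of fun x y => braket ψ φ * (ψ x * conj (φ y)) := by
  ext x y
  simp only [Matrix.mul_apply, dm, Matrix.of_apply, braket, Finset.sum_mul]
  apply Finset.sum_congr rfl
  intro z _; ring

lemma dm_posSemidef (ψ : I → ℂ) : (dm ψ).PosSemidef := by
  rw [Matrix.posSemidef_iff_dotProduct_mulVec]
  constructor
  · exact dm_conjTranspose ψ
  · intro x
    have : dotProduct (star x) ((dm ψ).mulVec x) = conj (braket ψ x) * braket ψ x := by
      simp only [dotProduct, Matrix.mulVec, dotProduct, dm, Matrix.of_apply,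
        braket, Pi.star_apply, RCLike.star_def, map_sum, map_mul, Complex.conj_conj,
        Finset.mul_sum, Finset.sum_mul]
      rw [Finset.sum_comm]
      apply Finset.sum_congr rfl; intro z _
      apply Finset.sum_congr rfl; intro w _
      ring
    rw [this, Complex.nonneg_iff]
    constructor
    · simp [Complex.mul_re]; nlinarith [Complex.sq_norm (braket ψ x)]
    · simp [Complex.mul_im]; ring
  
variable [DecidableEq I]

open scoped MatrixOrder in
lemma psdSqrt_of_sq {A B : Matrix I I ℂ} (hB : B.PosSemidef) (h : B * B = A) :
    psdSqrt A = B := by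
  have hA : A.PosSemidef := by
    have := Matrix.posSemidef_conjTranspose_mul_self B
    rwa [hB.1, h] at this
  rw [psdSqrt, dif_pos hA]
  have h1 : CFC.sqrt A = B := CFC.sqrt_unique h hB.nonneg
  rw [CFC.sqrt_eq_real_sqrt A hA.nonneg, cfcₙ_eq_cfc (hf0 := by simp), hA.1.cfc_eq] at h1
  rw [← h1, Matrix.IsHermitian.cfc, Unitary.conjStarAlgAut_apply]
  rfl

lemma psdSqrt_zero : psdSqrt (0 : Matrix I I ℂ) = 0 :=
  psdSqrt_of_sq Matrix.PosSemidef.zero (by simp)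

lemma dm_trace (ψ : I → ℂ) : (dm ψ).trace = braket ψ ψ := by
  simp [Matrix.trace, dm, braket, Matrix.diag, mul_comm]

lemma traceNorm_zero : traceNorm (0 : Matrix I I ℂ) = 0 := by
  simp [traceNorm, psdSqrt_zero]

lemma braket_smul (a : ℂ) (ψ φ : I → ℂ) : braket ψ (a • φ) = a * braket ψ φ := by
  simp [braket, Finset.mul_sum]; ring_nf
  apply Finset.sum_congr rfl; intro z _; ring

lemma smul_braket (a : ℂ) (ψ φ : I → ℂ) : braket (a • ψ) φ = conj a * braket ψ φ := by
  simp [braket, Finset.mul_sum]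
  apply Finset.sum_congr rfl; intro z _; ring

lemma dm_smul_self_mul (ψ : I → ℂ) : dm ψ * dm ψ = braket ψ ψ • dm ψ := by
  rw [dm_mul_dm]; ext x y; simp [dm]

lemma traceNorm_dm (ψ : I → ℂ) : traceNorm (dm ψ) = (braket ψ ψ).re := by
  rw [traceNorm, dm_conjTranspose, psdSqrt_of_sq (dm_posSemidef ψ) rfl, dm_trace]


lemma posSemidef_add {A B : Matrix I I ℂ} (hA : A.PosSemidef) (hB : B.PosSemidef) :
    (A + B).PosSemidef := by
  exact hA.add hB

lemma braket_comb {ψ uv : I → ℂ} (α β γ δ : ℂ)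
    (h1 : braket ψ ψ = 1) (h2 : braket uv uv = 1) (h3 : braket ψ uv = 0) (h4 : braket uv ψ = 0) :
    braket (fun x => α * ψ x + β * uv x) (fun x => γ * ψ x + δ * uv x)
      = conj α * γ + conj β * δ := by
  have expand : ∀ x, conj (α * ψ x + β * uv x) * (γ * ψ x + δ * uv x)
      = conj α * γ * (conj (ψ x) * ψ x) + conj α * δ * (conj (ψ x) * uv x)
        + conj β * γ * (conj (uv x) * ψ x) + conj β * δ * (conj (uv x) * uv x) := by
    intro x; simp only [map_add, map_mul]; ring
  simp only [braket] at h1 h2 h3 h4 ⊢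
  simp only [expand, Finset.sum_add_distrib, ← Finset.mul_sum, h1, h2, h3, h4]
  ring

lemma dm_smul (t : ℂ) (ψ : I → ℂ) : dm (t • ψ) = (t * conj t) • dm ψ := by
  ext x y; simp [dm, Matrix.smul_apply]; ring

/-- Trace norm of difference of pure states. -/
lemma traceNorm_dm_sub_dm [DecidableEq I] {ψ ψ' : I → ℂ}
    (hψ : braket ψ ψ = 1) (hψ' : braket ψ' ψ' = 1) :
    traceNorm (dm ψ - dm ψ') = 2 * Real.sqrt (1 - ‖braket ψ ψ'‖ ^ 2) := by
  set c : ℂ := braket ψ ψ' with hc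
  have hcs : ‖c‖ ^ 2 ≤ 1 := by
    have := abs_braket_sq_le ψ ψ'
    rwa [hψ, hψ', Complex.one_re, one_mul] at this
  set u : I → ℂ := fun x => ψ' x - c * ψ x with hu
  have hbsub : ∀ (φ : I → ℂ), braket φ u = braket φ ψ' - c * braket φ ψ := by
    intro φ
    simp only [braket, hu, Finset.mul_sum, ← Finset.sum_sub_distrib]
    apply Finset.sum_congr rfl; intro x _; ring
  have hbsub' : ∀ (φ : I → ℂ), braket u φ = braket ψ' φ - conj c * braket ψ φ := by
    intro φ
    simp only [braket, hu, Finset.mul_sum, ← Finset.sum_sub_distrib]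
    apply Finset.sum_congr rfl; intro x _; simp only [map_sub, map_mul]; ring
  have hψ'ψ : braket ψ' ψ = conj c := by rw [← braket_conj, ← hc]
  have huu : braket u u = 1 - c * conj c := by
    rw [hbsub' u, hbsub ψ', hbsub ψ, hψ', hψ, hψ'ψ, ← hc]; ring
  have habs : (c * conj c) = ((‖c‖ ^ 2 : ℝ) : ℂ) := by
    rw [Complex.mul_conj]
    norm_cast
    exact (Complex.sq_norm c).symm
  by_cases hr : ‖c‖ ^ 2 = 1
  · -- degenerate case : ψ' = c • ψ, difference is zero
    have huz : braket u u = 0 := by rw [huu, habs, hr]; simp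
    have hu0 : u = 0 := braket_self_eq_zero huz
    have hpsi' : ψ' = c • ψ := by
      funext x
      have := congrFun hu0 x
      simp only [hu, Pi.zero_apply] at this
      simp [Pi.smul_apply, smul_eq_mul]
      linear_combination this
    have : dm ψ' = dm ψ := by
      rw [hpsi', dm_smul, habs, hr]
      simp
    rw [this, sub_self, hr]
    simp [traceNorm, psdSqrt_zero]
  · -- main case
    have hrpos : 0 < 1 - ‖c‖ ^ 2 := lt_of_le_of_ne (by linarith) (by intro h; exact hr (by linarith))
    set s : ℝ := Real.sqrt (1 - ‖c‖ ^ 2) with hs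
    have hspos : 0 < s := Real.sqrt_pos.mpr hrpos
    have hs2 : (s : ℂ) ^ 2 = 1 - c * conj c := by
      have : s ^ 2 = 1 - ‖c‖ ^ 2 := Real.sq_sqrt (le_of_lt hrpos)
      rw [habs]
      norm_cast
    set uv : I → ℂ := fun x => (s : ℂ)⁻¹ * u x with huh
    have hsne : (s : ℂ) ≠ 0 := by
      simp only [ne_eq, Complex.ofReal_eq_zero]
      exact ne_of_gt hspos
    have huvuv : braket uv uv = 1 := by
      simp only [braket, huh, map_mul, map_inv₀, Complex.conj_ofReal]
      have : ∀ x, (s:ℂ)⁻¹ * conj (u x) * ((s:ℂ)⁻¹ * u x) = ((s:ℂ)^2)⁻¹ * (conj (u x) * u x) := by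
        intro x; rw [sq, mul_inv]; ring
      simp only [this, ← Finset.mul_sum]
      have h5 : (∑ x, conj (u x) * u x) = braket u u := rfl
      rw [h5, huu, ← hs2]
      have h6 : ((s:ℂ)^2) ≠ 0 := pow_ne_zero 2 hsne
      field_simp
    have hψuv : braket ψ uv = 0 := by
      have h1 : braket ψ u = 0 := by rw [hbsub, ← hc, hψ]; ring
      simp only [braket, huh] at h1 ⊢
      have : ∀ x, conj (ψ x) * ((s:ℂ)⁻¹ * u x) = (s:ℂ)⁻¹ * (conj (ψ x) * u x) := by intro x; ring
      simp only [this, ← Finset.mul_sum, h1, mul_zero]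
    have huvψ : braket uv ψ = 0 := by rw [← braket_conj, hψuv, map_zero]
    have hψ'eq : ∀ x, ψ' x = c * ψ x + (s:ℂ) * uv x := by
      intro x
      show ψ' x = c * ψ x + (s:ℂ) * ((s:ℂ)⁻¹ * u x)
      rw [← mul_assoc, mul_inv_cancel₀ hsne, one_mul]
      simp only [hu]
      ring
    -- the orthonormal pair
    set a : I → ℂ := fun x => ((s:ℂ) + 1) * ψ x + (-(conj c)) * uv x with ha
    set b : I → ℂ := fun x => c * ψ x + ((s:ℂ) + 1) * uv x with hb
    have hconj_s : conj ((s:ℂ) + 1) = (s:ℂ) + 1 := by simp [Complex.conj_ofReal]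
    have haa : braket a a = 2 * (1 + s) := by
      rw [ha, braket_comb _ _ _ _ hψ huvuv hψuv huvψ]
      simp only [map_neg, Complex.conj_conj, hconj_s]
      linear_combination hs2
    have hbb : braket b b = 2 * (1 + s) := by
      rw [hb, braket_comb _ _ _ _ hψ huvuv hψuv huvψ]
      rw [hconj_s]
      linear_combination hs2
    have hab : braket a b = 0 := by
      rw [ha, hb, braket_comb _ _ _ _ hψ huvuv hψuv huvψ]
      simp only [map_neg, Complex.conj_conj, hconj_s]
      ring
    have hba : braket b a = 0 := by rw [← braket_conj, hab, map_zero]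
    -- key matrix identity (unnormalized)
    have hkey : (2 * (1 + s) : ℂ) • (dm ψ - dm ψ') = (s : ℂ) • (dm a - dm b) := by
      ext x y
      simp only [Matrix.smul_apply, Matrix.sub_apply, dm, Matrix.of_apply, smul_eq_mul]
      rw [hψ'eq x, hψ'eq y, ha, hb]
      simp only [map_add, map_mul, map_neg, Complex.conj_conj, Complex.conj_ofReal, map_one]
      push_cast
      linear_combination (-(((s:ℂ)+2) * (ψ x * conj (ψ y)) + (s:ℂ) * (uv x * conj (uv y)))) * hs2
    -- normalization
    set N : ℝ := 2 * (1 + s) with hN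
    have hNpos : 0 < N := by rw [hN]; nlinarith
    set k : ℝ := (Real.sqrt N)⁻¹ with hk
    have hk2 : k ^ 2 = N⁻¹ := by
      rw [hk, inv_pow, Real.sq_sqrt hNpos.le]
    have hk2C : ((k:ℂ))^2 * (2 * (1 + (s:ℂ))) = 1 := by
      have h7 : (k^2 * N : ℝ) = 1 := by
        rw [hk2]; field_simp
      calc ((k:ℂ))^2 * (2 * (1 + (s:ℂ))) = ((k^2 * N : ℝ) : ℂ) := by push_cast [hN]; ring
      _ = 1 := by rw [h7]; norm_num
    set A : I → ℂ := fun x => (k:ℂ) * a x with hA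
    set B : I → ℂ := fun x => (k:ℂ) * b x with hB
    have hsc : ∀ (f g : I → ℂ), braket (fun x => (k:ℂ) * f x) (fun x => (k:ℂ) * g x)
        = ((k:ℂ))^2 * braket f g := by
      intro f g
      simp only [braket, map_mul, Complex.conj_ofReal, Finset.mul_sum]
      apply Finset.sum_congr rfl; intro x _; ring
    have hAA : braket A A = 1 := by rw [hA, hsc, haa]; exact hk2C
    have hBB : braket B B = 1 := by rw [hB, hsc, hbb]; exact hk2C
    have hAB : braket A B = 0 := by rw [hA, hB, hsc, hab, mul_zero]
    have hBA : braket B A = 0 := by rw [← braket_conj, hAB, map_zero]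
    have hdmA : dm A = ((k:ℂ)^2) • dm a := by
      ext x y
      simp only [hA, dm, Matrix.of_apply, Matrix.smul_apply, map_mul, Complex.conj_ofReal,
        smul_eq_mul]
      ring
    have hdmB : dm B = ((k:ℂ)^2) • dm b := by
      ext x y
      simp only [hB, dm, Matrix.of_apply, Matrix.smul_apply, map_mul, Complex.conj_ofReal,
        smul_eq_mul]
      ring
    have h0 : dm A - dm B = ((k:ℂ)^2) • (dm a - dm b) := by rw [hdmA, hdmB, smul_sub]
    have hkey2 : dm ψ - dm ψ' = (s:ℂ) • (dm A - dm B) := by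
      calc dm ψ - dm ψ' = (((k:ℂ)^2) * (2*(1+(s:ℂ)))) • (dm ψ - dm ψ') := by
            rw [hk2C, one_smul]
        _ = ((k:ℂ)^2) • ((2*(1+(s:ℂ))) • (dm ψ - dm ψ')) := by rw [smul_smul]
        _ = ((k:ℂ)^2) • ((s:ℂ) • (dm a - dm b)) := by rw [hkey]
        _ = (s:ℂ) • (dm A - dm B) := by rw [h0, smul_smul, smul_smul, mul_comm]
    have hΔH : (dm ψ - dm ψ').conjTranspose = dm ψ - dm ψ' := by
      rw [Matrix.conjTranspose_sub, dm_conjTranspose, dm_conjTranspose]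
    have hdmAA : dm A * dm A = dm A := by rw [dm_smul_self_mul, hAA, one_smul]
    have hdmBB : dm B * dm B = dm B := by rw [dm_smul_self_mul, hBB, one_smul]
    have hdmAB : dm A * dm B = 0 := by
      rw [dm_mul_dm, hAB]; ext x y; simp
    have hdmBA : dm B * dm A = 0 := by
      rw [dm_mul_dm, hBA]; ext x y; simp
    have e1 : (dm ψ - dm ψ').conjTranspose * (dm ψ - dm ψ') = ((s:ℂ)^2) • (dm A + dm B) := by
      rw [hΔH]
      conv_lhs => rw [hkey2]
      rw [Matrix.smul_mul, Matrix.mul_smul, smul_smul, ← sq]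
      congr 1
      rw [Matrix.sub_mul, Matrix.mul_sub, Matrix.mul_sub, hdmAA, hdmBB, hdmAB, hdmBA,
        sub_zero, zero_sub, sub_neg_eq_add]
    have hPSD : ((s:ℂ) • (dm A + dm B)).PosSemidef := by
      set t : ℝ := Real.sqrt s with ht
      have htt : ((t:ℂ)) * conj ((t:ℂ)) = (s:ℂ) := by
        rw [Complex.conj_ofReal]
        calc ((t:ℂ)) * ((t:ℂ)) = ((t * t : ℝ) : ℂ) := by push_cast; ring
          _ = (s:ℂ) := by rw [Real.mul_self_sqrt hspos.le]
      have : (s:ℂ) • (dm A + dm B) = dm ((t:ℂ) • A) + dm ((t:ℂ) • B) := by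
        rw [dm_smul, dm_smul, htt, smul_add]
      rw [this]
      exact posSemidef_add (dm_posSemidef _) (dm_posSemidef _)
    have e2 : ((s:ℂ) • (dm A + dm B)) * ((s:ℂ) • (dm A + dm B))
        = (dm ψ - dm ψ').conjTranspose * (dm ψ - dm ψ') := by
      rw [e1, Matrix.smul_mul, Matrix.mul_smul, smul_smul, ← sq]
      congr 1
      rw [Matrix.add_mul, Matrix.mul_add, Matrix.mul_add, hdmAA, hdmBB, hdmAB, hdmBA,
        add_zero, zero_add]
    have hfin : psdSqrt ((dm ψ - dm ψ').conjTranspose * (dm ψ - dm ψ'))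
        = (s:ℂ) • (dm A + dm B) := psdSqrt_of_sq hPSD e2
    rw [traceNorm, hfin, Matrix.trace_smul, Matrix.trace_add, dm_trace, dm_trace, hAA, hBB]
    simp [Complex.ofReal_re, mul_comm]
    norm_num



end Aux

lemma sq_le_imp {X Y : ℝ} (hY : 0 ≤ Y) (h : X^2 ≤ Y^2) : X ≤ Y := by
  by_contra hcon
  push_neg at hcon
  nlinarith

lemma lorentz {ι : Type*} [Fintype ι] (x y : ι → ℝ) (hy : ∀ i, 0 ≤ y i) (hxy : ∀ i, y i ≤ x i) :
    ∑ i, Real.sqrt ((x i)^2 - (y i)^2) ≤ Real.sqrt ((∑ i, x i)^2 - (∑ i, y i)^2) := by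
  have h2 : ∑ i, Real.sqrt ((x i)^2-(y i)^2)
      = ∑ i, Real.sqrt (x i - y i) * Real.sqrt (x i + y i) := by
    refine Finset.sum_congr rfl fun i _ => ?_
    rw [show (x i)^2 - (y i)^2 = (x i - y i) * (x i + y i) by ring,
      Real.sqrt_mul (by linarith [hy i, hxy i])]
  rw [h2]
  have h3 : ∑ i, Real.sqrt (x i - y i) * Real.sqrt (x i + y i)
      ≤ Real.sqrt (∑ i, (x i - y i)) * Real.sqrt (∑ i, (x i + y i)) := by
    apply Real.sum_sqrt_mul_sqrt_le
    · intro i; linarith [hy i, hxy i]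
    · intro i; linarith [hy i, hxy i]
  refine h3.trans (le_of_eq ?_)
  rw [← Real.sqrt_mul (Finset.sum_nonneg fun i _ => by linarith [hy i, hxy i])]
  congr 1
  rw [Finset.sum_sub_distrib, Finset.sum_add_distrib]
  ring

lemma key_scalar {p q v : ℝ} (hp : 0 < p) (hq : 0 < q) (hv : 0 ≤ v) (hvpq : v^2 ≤ p*q) :
    p * (2 * Real.sqrt (1 - v^2/(p*q))) ≤ Real.sqrt ((p+q)^2 - 4*v^2) + |p - q| := by
  have harg : 0 ≤ (p+q)^2 - 4*v^2 := by nlinarith [sq_nonneg (p-q)]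
  set A := Real.sqrt ((p+q)^2 - 4*v^2) with hA
  have hA0 : 0 ≤ A := Real.sqrt_nonneg _
  have hA2 : A^2 = (p+q)^2 - 4*v^2 := Real.sq_sqrt harg
  have hLHS : p * (2 * Real.sqrt (1 - v^2/(p*q))) = 2 * Real.sqrt (p^2 - p*v^2/q) := by
    rw [show p^2 - p*v^2/q = p^2 * (1 - v^2/(p*q)) by field_simp]
    rw [Real.sqrt_mul (sq_nonneg p), Real.sqrt_sq hp.le]
    ring
  have hW : 0 ≤ p^2 - p*v^2/q := by
    rw [show p^2 - p*v^2/q = p*(p*q-v^2)/q by field_simp]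
    apply div_nonneg (mul_nonneg hp.le (by nlinarith)) hq.le
  rw [hLHS]
  have hsqrtW : (Real.sqrt (p^2 - p*v^2/q))^2 = p^2 - p*v^2/q := Real.sq_sqrt hW
  apply sq_le_imp (by positivity)
  -- goal : (2*√W)^2 ≤ (A + |p-q|)^2
  have hexp : (2*Real.sqrt (p^2 - p*v^2/q))^2 = 4*(p^2 - p*v^2/q) := by
    rw [mul_pow, hsqrtW]; ring
  rw [hexp]
  rcases le_or_gt p q with hpq | hpq
  · have habs : |p - q| = q - p := by rw [abs_of_nonpos (by linarith)]; ring
    rw [habs]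
    have h4 : 4*(p^2 - p*v^2/q) - A^2 - (q-p)^2 = 2*(p-q)*((p+q) - 2*v^2/q) := by
      rw [hA2]; field_simp; ring
    have h5 : 2*v^2/q ≤ 2*p := by rw [div_le_iff₀ hq]; nlinarith
    nlinarith [mul_nonneg (sub_nonneg.mpr hpq) (show 0 ≤ (p+q) - 2*v^2/q by linarith)]
  · have habs : |p - q| = p - q := by rw [abs_of_pos (by linarith)]
    rw [habs]
    have hAq : (p+q)*q - 2*v^2 ≤ A*q := by
      apply sq_le_imp (by positivity)
      rw [mul_pow, hA2]
      nlinarith [mul_nonneg hv hv, sq_nonneg v]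
    have hAge : (p+q) - 2*v^2/q ≤ A := by
      have hXq : ((p+q) - 2*v^2/q) * q = (p+q)*q - 2*v^2 := by field_simp
      have h6 := hAq
      rw [← hXq] at h6
      exact (mul_le_mul_iff_of_pos_right hq).mp h6
    have h4 : 4*(p^2 - p*v^2/q) - A^2 - (p-q)^2 = 2*(p-q)*((p+q) - 2*v^2/q) := by
      rw [hA2]; field_simp; ring
    nlinarith [mul_le_mul_of_nonneg_left hAge (show (0:ℝ) ≤ 2*(p-q) by linarith)]



lemma dm_zero {I : Type*} : dm (0 : I → ℂ) = 0 := by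
  ext x y; simp [dm]

lemma braket_zero_right {I : Type*} [Fintype I] (f : I → ℂ) : braket f 0 = 0 := by
  simp [braket]

lemma traceNorm_neg {I : Type*} [Fintype I] [DecidableEq I] (A : Matrix I I ℂ) :
    traceNorm (-A) = traceNorm A := by
  simp [traceNorm, Matrix.conjTranspose_neg, Matrix.neg_mul, Matrix.mul_neg, neg_neg]


section Aux2
variable {IA IB : Type*} [Fintype IA] [Fintype IB] [DecidableEq IA]

lemma onb_col {β : IA → IA → ℂ} (hβ : ONB β) (x x' : IA) :
    ∑ i, β i x * conj (β i x') = if x = x' then 1 else 0 := by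
  set M : Matrix IA IA ℂ := Matrix.of fun i x => conj (β i x) with hM
  have h1 : M * M.conjTranspose = 1 := by
    ext i j
    simp only [Matrix.mul_apply, Matrix.conjTranspose_apply, hM, Matrix.of_apply,
      RCLike.star_def, Complex.conj_conj]
    have h0 := hβ i j
    simp only [braket] at h0
    rw [h0, Matrix.one_apply]
  have h2 : M.conjTranspose * M = 1 := mul_eq_one_comm.mp h1
  have h3 : (M.conjTranspose * M) x x' = (1 : Matrix IA IA ℂ) x x' := by rw [h2]
  simp only [Matrix.mul_apply, Matrix.conjTranspose_apply, hM, Matrix.of_apply,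
    RCLike.star_def, Complex.conj_conj, Matrix.one_apply] at h3
  exact h3

lemma parseval {β : IA → IA → ℂ} (hβ : ONB β) (Ψ Ψ' : IA × IB → ℂ) :
    ∑ i, braket (contract (β i) Ψ) (contract (β i) Ψ') = braket Ψ Ψ' := by
  have hy : ∀ y, ∑ i, conj (contract (β i) Ψ y) * contract (β i) Ψ' y
      = ∑ x, conj (Ψ (x, y)) * Ψ' (x, y) := by
    intro y
    have e1 : ∀ i, conj (contract (β i) Ψ y) * contract (β i) Ψ' y
        = ∑ x, ∑ x', (β i x * conj (β i x')) * (conj (Ψ (x,y)) * Ψ' (x',y)) := by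
      intro i
      simp only [contract, map_sum, map_mul, Complex.conj_conj]
      rw [Finset.sum_mul_sum]
      apply Finset.sum_congr rfl; intro x _
      apply Finset.sum_congr rfl; intro x' _
      ring
    simp only [e1]
    rw [Finset.sum_comm]
    apply Finset.sum_congr rfl; intro x _
    rw [Finset.sum_comm]
    have e2 : ∀ x', ∑ i, (β i x * conj (β i x')) * (conj (Ψ (x,y)) * Ψ' (x',y))
        = (if x = x' then 1 else 0) * (conj (Ψ (x,y)) * Ψ' (x',y)) := by
      intro x'
      rw [← Finset.sum_mul, onb_col hβ x x']
    simp only [e2, ite_mul, one_mul, zero_mul]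
    simp
  calc ∑ i, braket (contract (β i) Ψ) (contract (β i) Ψ')
      = ∑ y, ∑ i, conj (contract (β i) Ψ y) * contract (β i) Ψ' y := by
        simp only [braket]
        exact Finset.sum_comm
    _ = ∑ y, ∑ x, conj (Ψ (x,y)) * Ψ' (x,y) := by
        apply Finset.sum_congr rfl; intro y _; exact hy y
    _ = braket Ψ Ψ' := by
        rw [braket, Fintype.sum_prod_type]
        exact Finset.sum_comm

lemma braket_contract (v : IA → ℂ) (Ψ : IA × IB → ℂ) :
    braket (contract v Ψ) (contract v Ψ) = ((prob v Ψ : ℝ) : ℂ) :=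
  braket_self_coe _

lemma prob_nonneg (v : IA → ℂ) (Ψ : IA × IB → ℂ) : 0 ≤ prob v Ψ :=
  braket_self_nonneg _

lemma contract_eq_zero {v : IA → ℂ} {Ψ : IA × IB → ℂ} (h : prob v Ψ = 0) :
    contract v Ψ = 0 := by
  apply braket_self_eq_zero
  rw [braket_contract, h, Complex.ofReal_zero]

lemma postState_eq_zero {v : IA → ℂ} {Ψ : IA × IB → ℂ} (h : prob v Ψ = 0) :
    postState v Ψ = 0 := by
  funext y
  have := congrFun (contract_eq_zero h) y
  simp [postState, this]

lemma braket_postState (v : IA → ℂ) (Ψ Ψ' : IA × IB → ℂ) :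
    braket (postState v Ψ) (postState v Ψ')
      = ((((Real.sqrt (prob v Ψ))⁻¹ * (Real.sqrt (prob v Ψ'))⁻¹ : ℝ)) : ℂ)
        * braket (contract v Ψ) (contract v Ψ') := by
  simp only [braket, postState, map_mul, map_inv₀, Complex.conj_ofReal, Finset.mul_sum]
  apply Finset.sum_congr rfl; intro y _
  push_cast
  ring

lemma braket_postState_self {v : IA → ℂ} {Ψ : IA × IB → ℂ} (h : 0 < prob v Ψ) :
    braket (postState v Ψ) (postState v Ψ) = 1 := by
  rw [braket_postState, braket_contract]
  have h1 : (Real.sqrt (prob v Ψ))⁻¹ * (Real.sqrt (prob v Ψ))⁻¹ = (prob v Ψ)⁻¹ := by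
    rw [← mul_inv, Real.mul_self_sqrt (prob_nonneg v Ψ)]
  rw [h1]
  have h2 : (prob v Ψ : ℂ) ≠ 0 := by
    simp only [ne_eq, Complex.ofReal_eq_zero]
    exact ne_of_gt h
  push_cast
  field_simp


end Aux2

/-- Continuity bound for the average post-measurement entanglement: under
the stated assumptions on the seed measure `E` and the function `f`, for every fixed
orthonormal basis `β` of `H_A` and unit vectors `Ψ, Ψ'`,
`|Ē_β(Ψ) − Ē_β(Ψ')| ≤ f(2‖Ψ − Ψ'‖₁) + ‖Ψ − Ψ'‖₁`. -/
theorem avg_entanglement_continuity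
    {IA IB : Type*} [Fintype IA] [DecidableEq IA] [Fintype IB] [DecidableEq IB]
    (E : (IB → ℂ) → ℝ) (f : ℝ → ℝ)
    (hf_nonneg : ∀ x : ℝ, 0 ≤ x → 0 ≤ f x)
    (hf_concave : ConcaveOn ℝ (Set.Ici (0 : ℝ)) f)
    (hf_mono : MonotoneOn f (Set.Ici (0 : ℝ)))
    (hE_range : ∀ ψ : IB → ℂ, braket ψ ψ = 1 → E ψ ∈ Set.Icc (0 : ℝ) 1)
    (hE_zero : E 0 = 0)
    (hE_cont : ∀ ψ ψ' : IB → ℂ, braket ψ ψ = 1 → braket ψ' ψ' = 1 →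
      |E ψ - E ψ'| ≤ f (traceNorm (dm ψ - dm ψ')))
    (hE_bound : ∀ ψ : IB → ℂ, braket ψ ψ = 1 → E ψ ≤ f 1)
    (β : IA → IA → ℂ) (hβ : ONB β)
    (Ψ Ψ' : IA × IB → ℂ) (hΨ : braket Ψ Ψ = 1) (hΨ' : braket Ψ' Ψ' = 1) :
    |avgE E β Ψ - avgE E β Ψ'| ≤
      f (2 * traceNorm (dm Ψ - dm Ψ')) + traceNorm (dm Ψ - dm Ψ') := by
  classical
  have hpnn : ∀ i : IA, 0 ≤ prob (β i) Ψ := fun i => prob_nonneg _ _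
  have hqnn : ∀ i : IA, 0 ≤ prob (β i) Ψ' := fun i => prob_nonneg _ _
  set T : ℝ := traceNorm (dm Ψ - dm Ψ') with hT
  set V : ℝ := ‖braket Ψ Ψ'‖ with hV
  have hTval : T = 2 * Real.sqrt (1 - V^2) := traceNorm_dm_sub_dm hΨ hΨ'
  have hVnn : 0 ≤ V := by rw [hV]; exact norm_nonneg _
  have hT0 : 0 ≤ T := by rw [hTval]; positivity
  set p : IA → ℝ := fun i => prob (β i) Ψ with hp
  set q : IA → ℝ := fun i => prob (β i) Ψ' with hq
  set v : IA → ℝ := fun i =>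
    ‖braket (contract (β i) Ψ) (contract (β i) Ψ')‖ with hv
  set D : IA → ℝ := fun i =>
    traceNorm (dm (postState (β i) Ψ) - dm (postState (β i) Ψ')) with hD
  set R : IA → ℝ := fun i => Real.sqrt ((p i + q i)^2 - 4*(v i)^2) with hR
  have hvnn : ∀ i, 0 ≤ v i := fun i => norm_nonneg _
  have hvpq : ∀ i, (v i)^2 ≤ p i * q i := fun i => abs_braket_sq_le _ _
  have hsum_p : ∑ i, p i = 1 := by
    have h := parseval hβ Ψ Ψ
    rw [hΨ] at h
    have h2 := congrArg Complex.re h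
    rw [Complex.re_sum] at h2
    simpa [hp, prob] using h2
  have hsum_q : ∑ i, q i = 1 := by
    have h := parseval hβ Ψ' Ψ'
    rw [hΨ'] at h
    have h2 := congrArg Complex.re h
    rw [Complex.re_sum] at h2
    simpa [hq, prob] using h2
  have hsumv : V ≤ ∑ i, v i := by
    rw [hV, ← parseval hβ Ψ Ψ']
    exact norm_sum_le _ _
  have hRsum : ∑ i, R i ≤ T := by
    have hxy : ∀ i, 2 * v i ≤ p i + q i := by
      intro i
      apply sq_le_imp (by have := hpnn i; have := hqnn i; dsimp [p, q] at *; linarith)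
      nlinarith [hvpq i, sq_nonneg (p i - q i)]
    have hlor := lorentz (fun i => p i + q i) (fun i => 2 * v i)
      (fun i => by have h9 := hvnn i; linarith) hxy
    have hRe : ∀ i, R i = Real.sqrt ((p i + q i)^2 - (2*(v i))^2) := by
      intro i; rw [hR]; ring_nf
    calc ∑ i, R i = ∑ i, Real.sqrt ((p i + q i)^2 - (2*(v i))^2) :=
          Finset.sum_congr rfl fun i _ => hRe i
      _ ≤ Real.sqrt ((∑ i, (p i + q i))^2 - (∑ i, 2*(v i))^2) := hlor
      _ ≤ T := by
          rw [hTval]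
          have h1 : ∑ i, (p i + q i) = 2 := by
            rw [Finset.sum_add_distrib, hsum_p, hsum_q]; norm_num
          have h2 : ∑ i, 2 * v i = 2 * ∑ i, v i := by rw [Finset.mul_sum]
          rw [h1, h2]
          have h3 : (2:ℝ)^2 - (2*∑ i, v i)^2 ≤ 4*(1 - V^2) := by
            nlinarith [hsumv, hVnn]
          calc Real.sqrt ((2:ℝ)^2 - (2*∑ i, v i)^2) ≤ Real.sqrt (4*(1-V^2)) :=
                Real.sqrt_le_sqrt h3
            _ = 2 * Real.sqrt (1-V^2) := by
                rw [show (4:ℝ)*(1-V^2) = 2^2*(1-V^2) by norm_num,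
                  Real.sqrt_mul (by positivity), Real.sqrt_sq (by norm_num)]
  have hpqR : ∀ i, |p i - q i| ≤ R i := by
    intro i
    rw [← Real.sqrt_sq_eq_abs]
    apply Real.sqrt_le_sqrt
    nlinarith [hvpq i]
  have habsq : ∑ i, |p i - q i| ≤ T :=
    le_trans (Finset.sum_le_sum fun i _ => hpqR i) hRsum
  have hEφ'mem : ∀ i, E (postState (β i) Ψ') ∈ Set.Icc (0:ℝ) 1 := by
    intro i
    rcases (hqnn i).eq_or_lt with h0 | h0
    · rw [postState_eq_zero h0.symm, hE_zero]
      exact ⟨le_refl 0, zero_le_one⟩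
    · exact hE_range _ (braket_postState_self h0)
  have hEφmem : ∀ i, E (postState (β i) Ψ) ∈ Set.Icc (0:ℝ) 1 := by
    intro i
    rcases (hpnn i).eq_or_lt with h0 | h0
    · rw [postState_eq_zero h0.symm, hE_zero]
      exact ⟨le_refl 0, zero_le_one⟩
    · exact hE_range _ (braket_postState_self h0)
  have hkey : ∀ i, 0 ≤ D i ∧ p i * D i ≤ R i + |p i - q i|
      ∧ |E (postState (β i) Ψ) - E (postState (β i) Ψ')| ≤ f (D i) := by
    intro i
    have hRnn : 0 ≤ R i := Real.sqrt_nonneg _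
    rcases (hpnn i).eq_or_lt with hp0 | hp0
    · -- p i = 0
      have hp0' : p i = 0 := hp0.symm
      have hφ0 : postState (β i) Ψ = 0 := postState_eq_zero hp0'
      rcases (hqnn i).eq_or_lt with hq0 | hq0
      · -- both zero
        have hq0' : q i = 0 := hq0.symm
        have hφ'0 : postState (β i) Ψ' = 0 := postState_eq_zero hq0'
        have hD0 : D i = 0 := by
          show traceNorm _ = 0
          rw [hφ0, hφ'0, sub_self, traceNorm_zero]
        refine ⟨le_of_eq hD0.symm, ?_, ?_⟩
        · rw [hD0, mul_zero]
          positivity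
        · rw [hφ0, hφ'0, sub_self, abs_zero, hD0]
          exact hf_nonneg 0 le_rfl
      · -- p = 0 < q
        have hD1 : D i = 1 := by
          show traceNorm _ = 1
          rw [hφ0, dm_zero, zero_sub, traceNorm_neg, traceNorm_dm,
            braket_postState_self hq0, Complex.one_re]
        refine ⟨by rw [hD1]; norm_num, ?_, ?_⟩
        · rw [hp0', zero_mul]
          positivity
        · rw [hφ0, hE_zero, hD1, zero_sub, abs_neg,
            abs_of_nonneg (hEφ'mem i).1]
          exact hE_bound _ (braket_postState_self hq0)
    · -- 0 < p i
      rcases (hqnn i).eq_or_lt with hq0 | hq0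
      · -- q = 0 < p
        have hq0' : q i = 0 := hq0.symm
        have hφ'0 : postState (β i) Ψ' = 0 := postState_eq_zero hq0'
        have hD1 : D i = 1 := by
          show traceNorm _ = 1
          rw [hφ'0, dm_zero, sub_zero, traceNorm_dm,
            braket_postState_self hp0, Complex.one_re]
        have hvi : v i = 0 := by
          show ‖_‖ = 0
          rw [contract_eq_zero hq0', braket_zero_right, norm_zero]
        have hRi : R i = p i := by
          rw [hR]
          simp only [hvi, hq0']
          rw [show (p i + 0)^2 - 4*(0:ℝ)^2 = (p i)^2 by ring]
          exact Real.sqrt_sq hp0.le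
        refine ⟨by rw [hD1]; norm_num, ?_, ?_⟩
        · rw [hD1, mul_one, hRi, hq0', sub_zero, abs_of_pos hp0]
          linarith
        · rw [hφ'0, hE_zero, hD1, sub_zero, abs_of_nonneg (hEφmem i).1]
          exact hE_bound _ (braket_postState_self hp0)
      · -- both positive
        have hunit : braket (postState (β i) Ψ) (postState (β i) Ψ) = 1 :=
          braket_postState_self hp0
        have hunit' : braket (postState (β i) Ψ') (postState (β i) Ψ') = 1 :=
          braket_postState_self hq0
        have habs2 : (‖braket (postState (β i) Ψ) (postState (β i) Ψ')‖)^2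
            = (v i)^2 / (p i * q i) := by
          rw [braket_postState, norm_mul, Complex.norm_real, Real.norm_eq_abs, mul_pow,
            show |(Real.sqrt (prob (β i) Ψ))⁻¹ * (Real.sqrt (prob (β i) Ψ'))⁻¹|
              = (Real.sqrt (p i))⁻¹ * (Real.sqrt (q i))⁻¹ from
              abs_of_nonneg (by positivity)]
          rw [mul_pow, inv_pow, inv_pow, Real.sq_sqrt (hpnn i), Real.sq_sqrt (hqnn i)]
          rw [hv]
          field_simp
          rw [show p i * q i = prob (β i) Ψ * prob (β i) Ψ' from rfl]
          field_simp
        have hDval : D i = 2 * Real.sqrt (1 - (v i)^2/(p i * q i)) := by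
          show traceNorm _ = _
          rw [traceNorm_dm_sub_dm hunit hunit', habs2]
        refine ⟨by rw [hDval]; positivity, ?_, ?_⟩
        · rw [hDval, hR]
          exact key_scalar hp0 hq0 (hvnn i) (hvpq i)
        · exact hE_cont _ _ hunit hunit'
  have hjen : ∑ i, p i * f (D i) ≤ f (∑ i, p i * D i) := by
    have h := hf_concave.le_map_sum (fun i _ => hpnn i) hsum_p
      (fun i _ => Set.mem_Ici.mpr (hkey i).1)
    simpa [smul_eq_mul] using h
  have hsumD : ∑ i, p i * D i ≤ 2*T := by
    calc ∑ i, p i * D i ≤ ∑ i, (R i + |p i - q i|) :=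
          Finset.sum_le_sum fun i _ => (hkey i).2.1
      _ = (∑ i, R i) + ∑ i, |p i - q i| := Finset.sum_add_distrib
      _ ≤ T + T := add_le_add hRsum habsq
      _ = 2*T := by ring
  have hfmono : f (∑ i, p i * D i) ≤ f (2*T) :=
    hf_mono (Set.mem_Ici.mpr (Finset.sum_nonneg fun i _ =>
        mul_nonneg (hpnn i) (hkey i).1))
      (Set.mem_Ici.mpr (by linarith)) hsumD
  have hsplit : avgE E β Ψ - avgE E β Ψ'
      = ∑ i, (p i * (E (postState (β i) Ψ) - E (postState (β i) Ψ'))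
          + (p i - q i) * E (postState (β i) Ψ')) := by
    rw [show avgE E β Ψ = ∑ i, p i * E (postState (β i) Ψ) from rfl,
      show avgE E β Ψ' = ∑ i, q i * E (postState (β i) Ψ') from rfl,
      ← Finset.sum_sub_distrib]
    apply Finset.sum_congr rfl; intro i _; ring
  calc |avgE E β Ψ - avgE E β Ψ'|
      = |∑ i, (p i * (E (postState (β i) Ψ) - E (postState (β i) Ψ'))
          + (p i - q i) * E (postState (β i) Ψ'))| := by rw [hsplit]
    _ ≤ ∑ i, |p i * (E (postState (β i) Ψ) - E (postState (β i) Ψ'))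
          + (p i - q i) * E (postState (β i) Ψ')| := Finset.abs_sum_le_sum_abs _ _
    _ ≤ ∑ i, (p i * f (D i) + |p i - q i|) := by
        apply Finset.sum_le_sum
        intro i _
        calc |p i * (E (postState (β i) Ψ) - E (postState (β i) Ψ'))
              + (p i - q i) * E (postState (β i) Ψ')|
            ≤ |p i * (E (postState (β i) Ψ) - E (postState (β i) Ψ'))|
              + |(p i - q i) * E (postState (β i) Ψ')| := abs_add_le _ _
          _ ≤ p i * f (D i) + |p i - q i| := by
              apply add_le_add
              · rw [abs_mul, abs_of_nonneg (hpnn i)]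
                exact mul_le_mul_of_nonneg_left (hkey i).2.2 (hpnn i)
              · rw [abs_mul]
                have h1 : |E (postState (β i) Ψ')| ≤ 1 := by
                  rw [abs_of_nonneg (hEφ'mem i).1]
                  exact (hEφ'mem i).2
                calc |p i - q i| * |E (postState (β i) Ψ')|
                    ≤ |p i - q i| * 1 :=
                      mul_le_mul_of_nonneg_left h1 (abs_nonneg _)
                  _ = |p i - q i| := mul_one _
    _ = (∑ i, p i * f (D i)) + ∑ i, |p i - q i| := Finset.sum_add_distrib
    _ ≤ f (∑ i, p i * D i) + T := add_le_add hjen habsq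
    _ ≤ f (2*T) + T := add_le_add_left hfmono T


end QIpaper
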